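/- Let 0 ≤ α < ∞, a = cosh α, 2 ≤ k, 0 < β. For f₀ with s ↦ f₀(s)(s - cosh α)^{(k-3)/2} integrable, the slice integral (σ_{k-2}/σ_{k-1}) ∫_{-1}^1 f₀(u sinh β sinh(α+β) + cosh β cosh(α+β)) (1-u²)^{(k-3)/2} du equals (σ_{k-2}/σ_{k-1}) (sinh β sinh(α+β))^{2-k} ∫_{cosh α}^{cosh(α+2β)} f₀(s) (s - cosh α)^{(k-3)/2} (cosh(α+2β) - s)^{(k-3)/2} ds. -/
import Mathlib


open MeasureTheory Set

/-- Theorem 6.1 (exterior case), hyperbolic change-of-variables identity for the tangent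
slice transform on the hyperboloid. -/
theorem hyperbolic_slice_change_of_variables (k : ℕ) (hk : 2 ≤ k)
    (α β : ℝ) (hα0 : 0 ≤ α) (hβ0 : 0 < β)
    (f₀ : ℝ → ℝ)
    (hf : IntegrableOn
      (fun s => f₀ s * (s - Real.cosh α) ^ (((k : ℝ) - 3) / 2) *
        (Real.cosh (α + 2 * β) - s) ^ (((k : ℝ) - 3) / 2))
      (Set.Ioo (Real.cosh α) (Real.cosh (α + 2 * β))) volume)
    (σk1 σk2 : ℝ)
    (hσ1 : σk1 = 2 * Real.pi ^ ((k : ℝ) / 2) / Real.Gamma ((k : ℝ) / 2))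
    (hσ2 : σk2 = 2 * Real.pi ^ (((k : ℝ) - 1) / 2) / Real.Gamma (((k : ℝ) - 1) / 2)) :
    σk2 / σk1 *
      ∫ u in (-1:ℝ)..1,
        f₀ (u * Real.sinh β * Real.sinh (α + β) + Real.cosh β * Real.cosh (α + β)) *
          (1 - u ^ 2) ^ (((k : ℝ) - 3) / 2) =
    σk2 / σk1 * (Real.sinh β * Real.sinh (α + β)) ^ (2 - (k : ℝ)) *
      ∫ s in (Real.cosh α)..(Real.cosh (α + 2 * β)),
        f₀ s * (s - Real.cosh α) ^ (((k : ℝ) - 3) / 2) *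
          (Real.cosh (α + 2 * β) - s) ^ (((k : ℝ) - 3) / 2) := by
  set p : ℝ := ((k : ℝ) - 3) / 2 with hp
  set c : ℝ := Real.sinh β * Real.sinh (α + β) with hcdef
  set d : ℝ := Real.cosh β * Real.cosh (α + β) with hddef
  have hc : 0 < c := mul_pos (Real.sinh_pos_iff.mpr hβ0)
    (Real.sinh_pos_iff.mpr (by linarith))
  have hB : Real.cosh (α + 2 * β) = d + c := by
    rw [show α + 2 * β = (α + β) + β by ring, Real.cosh_add, hcdef, hddef]; ring
  have hA : Real.cosh α = d - c := by
    rw [show α = (α + β) - β by ring, Real.cosh_sub, hcdef, hddef]; ring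
  have congr1 : (∫ u in (-1:ℝ)..1, f₀ (u * c + d) * (1 - u ^ 2) ^ p)
      = ∫ u in (-1:ℝ)..1, c ^ (-(2*p)) *
          (f₀ (c * u + d) * ((c * u + d) - Real.cosh α) ^ p *
            (Real.cosh (α + 2 * β) - (c * u + d)) ^ p) := by
    apply intervalIntegral.integral_congr
    intro u hu
    rw [Set.uIcc_of_le (by norm_num : (-1:ℝ) ≤ 1)] at hu
    have h1u : (0:ℝ) ≤ 1 + u := by linarith [hu.1]
    have h2u : (0:ℝ) ≤ 1 - u := by linarith [hu.2]
    have e1 : c * u + d - Real.cosh α = c * (1 + u) := by rw [hA]; ring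
    have e2 : Real.cosh (α + 2 * β) - (c * u + d) = c * (1 - u) := by rw [hB]; ring
    have e3 : (1 - u ^ 2 : ℝ) = (1 + u) * (1 - u) := by ring
    have e4 : c ^ (-(2*p)) * (c ^ p * c ^ p) = 1 := by
      rw [← Real.rpow_add hc, ← Real.rpow_add hc, show -(2*p) + (p + p) = 0 by ring,
        Real.rpow_zero]
    simp only [e1, e2, e3, Real.mul_rpow hc.le h1u, Real.mul_rpow hc.le h2u,
      Real.mul_rpow h1u h2u, mul_comm u c]
    calc f₀ (c * u + d) * ((1 + u) ^ p * (1 - u) ^ p)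
        = (c ^ (-(2*p)) * (c ^ p * c ^ p)) *
            (f₀ (c * u + d) * ((1 + u) ^ p * (1 - u) ^ p)) := by rw [e4, one_mul]
      _ = _ := by ring
  have key : (∫ u in (-1:ℝ)..1, f₀ (u * c + d) * (1 - u ^ 2) ^ p)
      = c ^ (2 - (k : ℝ)) * ∫ s in (Real.cosh α)..(Real.cosh (α + 2 * β)),
          f₀ s * (s - Real.cosh α) ^ p * (Real.cosh (α + 2 * β) - s) ^ p := by
    rw [congr1, intervalIntegral.integral_const_mul,
      intervalIntegral.integral_comp_mul_add
        (fun s => f₀ s * (s - Real.cosh α) ^ p * (Real.cosh (α + 2 * β) - s) ^ p)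
        hc.ne' d,
      show c * (-1) + d = Real.cosh α by rw [hA]; ring,
      show c * 1 + d = Real.cosh (α + 2 * β) by rw [hB]; ring,
      smul_eq_mul, ← mul_assoc,
      show (2 - (k:ℝ)) = -(2*p) + (-1) by rw [hp]; ring,
      Real.rpow_add hc, Real.rpow_neg_one]
  have harg : ∀ u : ℝ, u * Real.sinh β * Real.sinh (α + β) + d = u * c + d := by
    intro u; rw [hcdef]; ring
  simp only [harg]
  rw [key]; ring
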